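/- Let S_u be a vector of generator matrices indexed by a subset u of cardinality at least 2. Then ρ(S_u) = min( ρ̃(S_u), min over j in u of ρ(S_{u\{j}}) ), where ρ̃ is the partial linear independence parameter defined using only strictly positive row counts. -/

import Mathlib

/-- The composition matrix formed by stacking the first `a j` rows of each `S j`. -/
def compMat {s k : ℕ} {F : Type*} [Field F] (S : Fin s → Matrix (Fin k) (Fin k) F)
    (a : Fin s → ℕ) : Matrix ((j : Fin s) × Fin (a j)) (Fin k) F :=
  fun p ℓ => if h : (p.2 : ℕ) < k then S p.1 ⟨p.2, h⟩ ℓ else 0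

/-- The linear independence parameter of the projection of the net onto the
coordinates in `u`: the largest `q ≤ k` such that every composition matrix built
from non-negative row counts supported on `u` and summing to `q` has full rank `q`. -/
noncomputable def rho {s k : ℕ} {F : Type*} [Field F] (S : Fin s → Matrix (Fin k) (Fin k) F)
    (u : Finset (Fin s)) : ℕ :=
  sSup {q | q ≤ k ∧ ∀ a : Fin s → ℕ, (∀ j ∉ u, a j = 0) → (∑ j, a j) = q →
    (compMat S a).rank = q}

/-- The partial linear independence parameter: the largest `q ≥ |u|` such that every
composition matrix built from strictly positive row counts supported on `u` and summing
to `q` has full rank `q`; by convention `|u| - 1` if no such `q` exists. -/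
noncomputable def rhoTilde {s k : ℕ} {F : Type*} [Field F] (S : Fin s → Matrix (Fin k) (Fin k) F)
    (u : Finset (Fin s)) : ℕ :=
  sSup (insert (u.card - 1) {q | u.card ≤ q ∧ ∀ a : Fin s → ℕ, (∀ j ∉ u, a j = 0) →
    (∀ j ∈ u, 0 < a j) → (∑ j, a j) = q → (compMat S a).rank = q})

namespace RhoAux

variable {s k : ℕ} {F : Type*} [Field F]

/-- Row of index (j, i), independent of the row-count vector. -/
def rowOf (S : Fin s → Matrix (Fin k) (Fin k) F) (j : Fin s) (i : ℕ) : Fin k → F :=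
  fun ℓ => if h : i < k then S j ⟨i, h⟩ ℓ else 0

lemma compMat_row (S : Fin s → Matrix (Fin k) (Fin k) F) (a : Fin s → ℕ)
    (p : (j : Fin s) × Fin (a j)) : compMat S a p = rowOf S p.1 p.2 := rfl

lemma rank_compMat_le_sum (S : Fin s → Matrix (Fin k) (Fin k) F) (a : Fin s → ℕ) :
    (compMat S a).rank ≤ ∑ j, a j := by
  have := (compMat S a).rank_le_card_height
  simpa [Fintype.card_sigma] using this

lemma rank_compMat_update_le (S : Fin s → Matrix (Fin k) (Fin k) F) (a : Fin s → ℕ)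
    (j₀ : Fin s) (c : ℕ) :
    (compMat S (Function.update a j₀ (a j₀ + c))).rank ≤ (compMat S a).rank + c := by
  classical
  set a' := Function.update a j₀ (a j₀ + c) with ha'
  rw [Matrix.rank_eq_finrank_span_row, Matrix.rank_eq_finrank_span_row]
  have hsub : Set.range (compMat S a') ⊆
      Set.range (compMat S a) ∪ Set.range (fun i : Fin c => rowOf S j₀ (a j₀ + i)) := by
    rintro v ⟨p, rfl⟩
    rcases p with ⟨j, i⟩
    by_cases hj : j = j₀
    · subst hj
      have hi : (i : ℕ) < a j + c := by
        have := i.2; simpa [ha', Function.update_self] using this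
      by_cases hlt : (i : ℕ) < a j
      · left; exact ⟨⟨j, ⟨i, hlt⟩⟩, rfl⟩
      · right
        have hle : a j ≤ (i : ℕ) := le_of_not_gt hlt
        refine ⟨⟨(i : ℕ) - a j, by omega⟩, ?_⟩
        show rowOf S j (a j + ((i : ℕ) - a j)) = compMat S a' ⟨j, i⟩
        rw [compMat_row, Nat.add_sub_cancel' hle]
    · left
      have hi : (i : ℕ) < a j := by
        have := i.2; simpa [ha', Function.update_of_ne hj] using this
      exact ⟨⟨j, ⟨i, hi⟩⟩, rfl⟩
  have h1 : Submodule.span F (Set.range (compMat S a')) ≤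
      Submodule.span F (Set.range (compMat S a)) ⊔
        Submodule.span F (Set.range (fun i : Fin c => rowOf S j₀ (a j₀ + i))) := by
    rw [← Submodule.span_union]
    exact Submodule.span_mono hsub
  calc Module.finrank F (Submodule.span F (Set.range (compMat S a')))
      ≤ Module.finrank F ((Submodule.span F (Set.range (compMat S a))) ⊔
        Submodule.span F (Set.range (fun i : Fin c => rowOf S j₀ (a j₀ + i))) :
          Submodule F (Fin k → F)) :=
        Submodule.finrank_mono h1
    _ ≤ Module.finrank F (Submodule.span F (Set.range (compMat S a))) +
        Module.finrank F (Submodule.span F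
          (Set.range (fun i : Fin c => rowOf S j₀ (a j₀ + i)))) :=
        Submodule.finrank_add_le_finrank_add_finrank _ _
    _ ≤ _ := by
        have := finrank_range_le_card (R := F) (fun i : Fin c => rowOf S j₀ (a j₀ + i))
        simp only [Set.finrank, Fintype.card_fin] at this
        show _ ≤ Module.finrank F (Submodule.span F (Set.range (compMat S a))) + c
        omega

lemma sum_update (a : Fin s → ℕ) (j₀ : Fin s) (c : ℕ) :
    ∑ j, Function.update a j₀ (a j₀ + c) j = (∑ j, a j) + c := by
  classical
  rw [Finset.sum_update_of_mem (Finset.mem_univ _), Finset.sdiff_singleton_eq_erase,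
    ← Finset.add_sum_erase _ a (Finset.mem_univ j₀)]
  omega

/-- The key "downward" step: if the matrix obtained by adding `r - m` extra rows in
coordinate `j₀` has full rank `r`, then the original matrix has full rank `m`. -/
lemma rank_eq_of_update (S : Fin s → Matrix (Fin k) (Fin k) F) (a : Fin s → ℕ) (j₀ : Fin s)
    {m r : ℕ} (hm : m ≤ r) (hsum : ∑ j, a j = m)
    (hr : (compMat S (Function.update a j₀ (a j₀ + (r - m)))).rank = r) :
    (compMat S a).rank = m := by
  have h2 := rank_compMat_update_le S a j₀ (r - m)
  have h3 := rank_compMat_le_sum S a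
  omega

lemma rho_mem (S : Fin s → Matrix (Fin k) (Fin k) F) (u : Finset (Fin s)) :
    rho S u ∈ {q : ℕ | q ≤ k ∧ ∀ a : Fin s → ℕ, (∀ j ∉ u, a j = 0) → (∑ j, a j) = q →
      (compMat S a).rank = q} := by
  apply Nat.sSup_mem
  · refine ⟨0, Nat.zero_le k, fun a hs hsum => ?_⟩
    have := rank_compMat_le_sum S a
    omega
  · exact ⟨k, fun q hq => hq.1⟩

lemma bdd_rho (S : Fin s → Matrix (Fin k) (Fin k) F) (u : Finset (Fin s)) :
    BddAbove {q : ℕ | q ≤ k ∧ ∀ a : Fin s → ℕ, (∀ j ∉ u, a j = 0) → (∑ j, a j) = q →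
      (compMat S a).rank = q} :=
  ⟨k, fun _ hq => hq.1⟩

lemma exists_pos_support (u : Finset (Fin s)) (hu : u.Nonempty) {q : ℕ} (hq : u.card ≤ q) :
    ∃ a : Fin s → ℕ, (∀ j ∉ u, a j = 0) ∧ (∀ j ∈ u, 0 < a j) ∧ ∑ j, a j = q := by
  classical
  obtain ⟨j₀, hj₀⟩ := hu
  refine ⟨fun j => (if j ∈ u then 1 else 0) + (if j = j₀ then q - u.card else 0),
    fun j hj => by
      have hne : j ≠ j₀ := fun h => hj (h ▸ hj₀)
      simp [hj, hne], fun j hj => by simp [hj], ?_⟩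
  rw [Finset.sum_add_distrib]
  have h1 : ∑ j, (if j ∈ u then 1 else 0) = u.card := by
    simp [Finset.sum_ite_mem]
  have h2 : ∑ j : Fin s, (if j = j₀ then q - u.card else 0) = q - u.card := by
    simp
  rw [h1, h2]; omega

lemma bdd_tilde (S : Fin s → Matrix (Fin k) (Fin k) F) (u : Finset (Fin s)) (hu : u.Nonempty) :
    BddAbove (insert (u.card - 1) {q : ℕ | u.card ≤ q ∧ ∀ a : Fin s → ℕ,
      (∀ j ∉ u, a j = 0) → (∀ j ∈ u, 0 < a j) → (∑ j, a j) = q →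
      (compMat S a).rank = q}) := by
  refine ⟨max (u.card - 1) k, ?_⟩
  rintro q (rfl | ⟨hq, hP⟩)
  · exact le_max_left _ _
  · obtain ⟨a, hs, hp, hsum⟩ := exists_pos_support u hu hq
    have hr := hP a hs hp hsum
    have hw : (compMat S a).rank ≤ k := by
      have := (compMat S a).rank_le_card_width
      simpa using this
    omega

end RhoAux

open RhoAux in
/-- Dynamic programming recurrence: for `|u| ≥ 2`,
`ρ(S_u) = min(ρ̃(S_u), min_{j ∈ u} ρ(S_{u \ {j}}))`. -/
theorem rho_eq_min_rhoTilde {s k : ℕ} {F : Type*} [Field F]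
    (S : Fin s → Matrix (Fin k) (Fin k) F) (u : Finset (Fin s)) (hu : 2 ≤ u.card) :
    rho S u = min (rhoTilde S u)
      (u.inf' (Finset.card_pos.mp (by omega)) (fun j => rho S (u.erase j))) := by
  classical
  have hu1 : u.Nonempty := Finset.card_pos.mp (by omega)
  obtain ⟨hρk, hρP⟩ := rho_mem S u
  apply le_antisymm
  · refine le_min ?_ ?_
    · rcases le_or_gt (rho S u) (u.card - 1) with h | h
      · exact h.trans (le_csSup (bdd_tilde S u hu1) (Set.mem_insert _ _))
      · exact le_csSup (bdd_tilde S u hu1)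
          (Set.mem_insert_of_mem _ ⟨by omega, fun a hs _ hsum => hρP a hs hsum⟩)
    · refine Finset.le_inf' _ _ fun j hj => ?_
      exact le_csSup (bdd_rho S (u.erase j))
        ⟨hρk, fun a hs hsum =>
          hρP a (fun i hi => hs i fun hmem => hi (Finset.mem_of_mem_erase hmem)) hsum⟩
  · set m := min (rhoTilde S u)
      (u.inf' (Finset.card_pos.mp (by omega)) (fun j => rho S (u.erase j))) with hm
    obtain ⟨j₁, hj₁⟩ := hu1
    have hmk : m ≤ k := by
      have h1 : m ≤ rho S (u.erase j₁) :=
        (min_le_right _ _).trans (Finset.inf'_le _ hj₁)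
      have h2 := (rho_mem S (u.erase j₁)).1
      omega
    refine le_csSup (bdd_rho S u) ⟨hmk, fun a hsupp hsum => ?_⟩
    by_cases hpos : ∀ j ∈ u, 0 < a j
    · -- all counts positive: use rhoTilde
      have hml : m ≤ rhoTilde S u := min_le_left _ _
      have hcm : u.card ≤ m := by
        calc u.card = ∑ _j ∈ u, 1 := by simp
          _ ≤ ∑ j ∈ u, a j := Finset.sum_le_sum hpos
          _ ≤ ∑ j, a j := Finset.sum_le_sum_of_subset u.subset_univ
          _ = m := hsum
      have hmem := Nat.sSup_mem (Set.insert_nonempty _ _) (bdd_tilde S u ⟨j₁, hj₁⟩)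
      rw [← rhoTilde] at hmem
      rcases hmem with h | ⟨htc, htP⟩
      · omega
      · apply rank_eq_of_update S a j₁ hml hsum
        apply htP
        · intro j hj
          rw [Function.update_of_ne (fun h : j = j₁ => hj (h ▸ hj₁))]
          exact hsupp j hj
        · intro j hj
          rcases eq_or_ne j j₁ with rfl | hne
          · rw [Function.update_self]; have := hpos j hj; omega
          · rw [Function.update_of_ne hne]; exact hpos j hj
        · rw [sum_update, hsum]; omega
    · -- some count is zero: use rho on u.erase j
      push_neg at hpos
      obtain ⟨j, hj, haj⟩ := hpos
      have haj0 : a j = 0 := by omega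
      have hml : m ≤ rho S (u.erase j) :=
        (min_le_right _ _).trans (Finset.inf'_le _ hj)
      obtain ⟨hrk, hrP⟩ := rho_mem S (u.erase j)
      have herase : (u.erase j).Nonempty := by
        rw [← Finset.card_pos, Finset.card_erase_of_mem hj]; omega
      obtain ⟨j₀, hj₀⟩ := herase
      apply rank_eq_of_update S a j₀ hml hsum
      apply hrP
      · intro i hi
        rw [Function.update_of_ne (fun h : i = j₀ => hi (h ▸ hj₀))]
        rcases eq_or_ne i j with rfl | hne
        · exact haj0
        · exact hsupp i fun hmem => hi (Finset.mem_erase_of_ne_of_mem hne hmem)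
      · rw [sum_update, hsum]; omega
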